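/- Let G be a group, H ≤ G, and suppose C ⊆ G satisfies CH = C and C ⊆ KF for a subgroup K ≤ G and a finite set F ⊆ G, and C is nonempty. Then there exists x ∈ C such that [H : H ∩ x⁻¹Kx] < ∞. -/

import Mathlib

open Pointwise

variable {G : Type*} [Group G]

/-- A subset `A` of `G` is `K`-finite if it is contained in finitely many right cosets of `K`. -/
def HFin (K : Subgroup G) (A : Set G) : Prop :=
  ∃ F : Set G, F.Finite ∧ A ⊆ (K : Set G) * F

/-- `A` is `K`-almost invariant if `A Δ Ag` is `K`-finite for all `g`. -/
def AlmostInv (K : Subgroup G) (A : Set G) : Prop :=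
  ∀ g : G, HFin K (symmDiff A ((· * g) '' A))

theorem finite_relindex_of_subset_KF (H K : Subgroup G) (F : Set G) (hF : F.Finite)
    (C : Set G) (hCne : C.Nonempty) (hCH : C * (H : Set G) = C)
    (hCKF : C ⊆ (K : Set G) * F) :
    ∃ x ∈ C, (Subgroup.map (MulAut.conj x⁻¹).toMonoidHom K).relIndex H ≠ 0 := by
  obtain ⟨x, hx⟩ := hCne
  refine ⟨x, hx, ?_⟩
  set L := Subgroup.map (MulAut.conj x⁻¹).toMonoidHom K with hL
  have hmem : ∀ h : H, x * (h : G)⁻¹ ∈ (K : Set G) * F := by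
    intro h
    apply hCKF
    rw [← hCH]
    exact Set.mul_mem_mul hx (by simpa using H.inv_mem h.2)
  choose k hk f hf hkf using fun h : H => Set.mem_mul.mp (hmem h)
  haveI : Finite F := hF.to_subtype
  haveI : Finite (H ⧸ L.subgroupOf H) := by
    apply Finite.of_injective (fun q : H ⧸ L.subgroupOf H => (⟨f q.out, hf q.out⟩ : F))
    intro q₁ q₂ hq
    simp only [Subtype.mk.injEq] at hq
    have h₁ := hkf q₁.out
    have h₂ := hkf q₂.out
    rw [hq] at h₁
    have hK : x * ((q₁.out : G)⁻¹ * (q₂.out : G)) * x⁻¹ = k q₁.out * (k q₂.out)⁻¹ := by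
      have : (x * (q₁.out : G)⁻¹) * (x * (q₂.out : G)⁻¹)⁻¹ = k q₁.out * (k q₂.out)⁻¹ := by
        rw [← h₁, ← h₂]; group
      rw [← this]; group
    have hmemL : ((q₁.out)⁻¹ * q₂.out : H) ∈ L.subgroupOf H := by
      rw [Subgroup.mem_subgroupOf]
      simp only [hL, Subgroup.mem_map]
      refine ⟨k q₁.out * (k q₂.out)⁻¹, mul_mem (hk q₁.out) (inv_mem (hk q₂.out)), ?_⟩
      simp only [MulEquiv.coe_toMonoidHom, MulAut.conj_apply]
      rw [← hK]
      push_cast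
      group
    calc q₁ = QuotientGroup.mk q₁.out := (QuotientGroup.out_eq' q₁).symm
      _ = QuotientGroup.mk q₂.out := by rwa [QuotientGroup.eq]
      _ = q₂ := QuotientGroup.out_eq' q₂
  rw [Subgroup.relIndex]
  exact Subgroup.index_ne_zero_of_finite
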